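/- The function G(θ) = cos θ · log((1+sin θ)/(1−sin θ)) − (1+cos θ) sin θ has exactly one root θ* in the open interval (0, π/2), and this root satisfies 1.0995 < θ* < 1.0996 (in radians, i.e., θ* ≈ 62.997°). Moreover G(θ) > 0 for 0 < θ < θ* and G(θ) < 0 for θ* < θ < π/2. -/

import Mathlib

open Real

private lemma nonneg_of_deriv' {f f' : ℝ → ℝ} (hder : ∀ x, HasDerivAt f (f' x) x)
    (hf0 : f 0 = 0) (hf' : ∀ x, 0 ≤ x → 0 ≤ f' x) : ∀ x, 0 ≤ x → 0 ≤ f x := by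
  intro x hx
  have hmono : MonotoneOn f (Set.Ici 0) := by
    apply monotoneOn_of_deriv_nonneg (convex_Ici 0)
    · exact fun t _ => (hder t).continuousAt.continuousWithinAt
    · exact fun t _ => (hder t).differentiableAt.differentiableWithinAt
    · intro t ht
      rw [interior_Ici] at ht
      rw [(hder t).deriv]
      exact hf' t ht.le
  have := hmono Set.self_mem_Ici (hx : x ∈ Set.Ici 0) hx
  rwa [hf0] at this

private lemma chain1 : ∀ x : ℝ, 0 ≤ x → 0 ≤ x - Real.sin x := by
  apply nonneg_of_deriv' (f' := fun x => 1 - Real.cos x)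
  · intro x; exact (hasDerivAt_id x).sub (Real.hasDerivAt_sin x)
  · simp
  · intro x _; simpa using Real.cos_le_one x

private lemma chain2 : ∀ x : ℝ, 0 ≤ x → 0 ≤ Real.cos x - (1 - x^2/2) := by
  apply nonneg_of_deriv' (f' := fun x => -Real.sin x + x)
  · intro x
    have h : HasDerivAt (fun x : ℝ => Real.cos x - (1 - x^2/2))
        (-Real.sin x - (0 - 2*x^(2-1)/2)) x :=
      (Real.hasDerivAt_cos x).sub ((hasDerivAt_const x (1:ℝ)).sub ((hasDerivAt_pow 2 x).div_const 2))
    convert h using 1; ring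
  · simp
  · intro x hx; have := chain1 x hx; linarith

private lemma chain3 : ∀ x : ℝ, 0 ≤ x → 0 ≤ Real.sin x - (x - x^3/6) := by
  apply nonneg_of_deriv' (f' := fun x => Real.cos x - (1 - x^2/2))
  · intro x
    have h : HasDerivAt (fun x : ℝ => Real.sin x - (x - x^3/6))
        (Real.cos x - (1 - 3*x^(3-1)/6)) x :=
      (Real.hasDerivAt_sin x).sub ((hasDerivAt_id x).sub ((hasDerivAt_pow 3 x).div_const 6))
    convert h using 1; ring
  · simp
  · exact chain2

private lemma chain4 : ∀ x : ℝ, 0 ≤ x → 0 ≤ (1 - x^2/2 + x^4/24) - Real.cos x := by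
  apply nonneg_of_deriv' (f' := fun x => Real.sin x - (x - x^3/6))
  · intro x
    have h : HasDerivAt (fun x : ℝ => (1 - x^2/2 + x^4/24) - Real.cos x)
        ((0 - 2*x^(2-1)/2 + 4*x^(4-1)/24) - (-Real.sin x)) x :=
      (((hasDerivAt_const x (1:ℝ)).sub ((hasDerivAt_pow 2 x).div_const 2)).add
        ((hasDerivAt_pow 4 x).div_const 24)).sub (Real.hasDerivAt_cos x)
    convert h using 1; ring
  · norm_num
  · exact chain3

private lemma chain5 : ∀ x : ℝ, 0 ≤ x → 0 ≤ (x - x^3/6 + x^5/120) - Real.sin x := by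
  apply nonneg_of_deriv' (f' := fun x => (1 - x^2/2 + x^4/24) - Real.cos x)
  · intro x
    have h : HasDerivAt (fun x : ℝ => (x - x^3/6 + x^5/120) - Real.sin x)
        ((1 - 3*x^(3-1)/6 + 5*x^(5-1)/120) - Real.cos x) x :=
      (((hasDerivAt_id x).sub ((hasDerivAt_pow 3 x).div_const 6)).add
        ((hasDerivAt_pow 5 x).div_const 120)).sub (Real.hasDerivAt_sin x)
    convert h using 1; ring
  · norm_num
  · exact chain4

private lemma chain6 : ∀ x : ℝ, 0 ≤ x → 0 ≤ Real.cos x - (1 - x^2/2 + x^4/24 - x^6/720) := by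
  apply nonneg_of_deriv' (f' := fun x => (x - x^3/6 + x^5/120) - Real.sin x)
  · intro x
    have h : HasDerivAt (fun x : ℝ => Real.cos x - (1 - x^2/2 + x^4/24 - x^6/720))
        (-Real.sin x - (0 - 2*x^(2-1)/2 + 4*x^(4-1)/24 - 6*x^(6-1)/720)) x :=
      (Real.hasDerivAt_cos x).sub ((((hasDerivAt_const x (1:ℝ)).sub
        ((hasDerivAt_pow 2 x).div_const 2)).add ((hasDerivAt_pow 4 x).div_const 24)).sub
        ((hasDerivAt_pow 6 x).div_const 720))
    convert h using 1; ring
  · norm_num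
  · exact chain5

private lemma chain7 : ∀ x : ℝ, 0 ≤ x → 0 ≤ Real.sin x - (x - x^3/6 + x^5/120 - x^7/5040) := by
  apply nonneg_of_deriv' (f' := fun x => Real.cos x - (1 - x^2/2 + x^4/24 - x^6/720))
  · intro x
    have h : HasDerivAt (fun x : ℝ => Real.sin x - (x - x^3/6 + x^5/120 - x^7/5040))
        (Real.cos x - (1 - 3*x^(3-1)/6 + 5*x^(5-1)/120 - 7*x^(7-1)/5040)) x :=
      (Real.hasDerivAt_sin x).sub ((((hasDerivAt_id x).sub
        ((hasDerivAt_pow 3 x).div_const 6)).add ((hasDerivAt_pow 5 x).div_const 120)).sub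
        ((hasDerivAt_pow 7 x).div_const 5040))
    convert h using 1; ring
  · norm_num
  · exact chain6

private lemma chain8 : ∀ x : ℝ, 0 ≤ x →
    0 ≤ (1 - x^2/2 + x^4/24 - x^6/720 + x^8/40320) - Real.cos x := by
  apply nonneg_of_deriv' (f' := fun x => Real.sin x - (x - x^3/6 + x^5/120 - x^7/5040))
  · intro x
    have h : HasDerivAt (fun x : ℝ => (1 - x^2/2 + x^4/24 - x^6/720 + x^8/40320) - Real.cos x)
        ((0 - 2*x^(2-1)/2 + 4*x^(4-1)/24 - 6*x^(6-1)/720 + 8*x^(8-1)/40320) - (-Real.sin x)) x :=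
      (((((hasDerivAt_const x (1:ℝ)).sub ((hasDerivAt_pow 2 x).div_const 2)).add
        ((hasDerivAt_pow 4 x).div_const 24)).sub ((hasDerivAt_pow 6 x).div_const 720)).add
        ((hasDerivAt_pow 8 x).div_const 40320)).sub (Real.hasDerivAt_cos x)
    convert h using 1; ring
  · norm_num
  · exact chain7

private lemma chain9 : ∀ x : ℝ, 0 ≤ x →
    0 ≤ (x - x^3/6 + x^5/120 - x^7/5040 + x^9/362880) - Real.sin x := by
  apply nonneg_of_deriv'
    (f' := fun x => (1 - x^2/2 + x^4/24 - x^6/720 + x^8/40320) - Real.cos x)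
  · intro x
    have h : HasDerivAt
        (fun x : ℝ => (x - x^3/6 + x^5/120 - x^7/5040 + x^9/362880) - Real.sin x)
        ((1 - 3*x^(3-1)/6 + 5*x^(5-1)/120 - 7*x^(7-1)/5040 + 9*x^(9-1)/362880) - Real.cos x) x :=
      ((((hasDerivAt_id x).sub ((hasDerivAt_pow 3 x).div_const 6)).add
        ((hasDerivAt_pow 5 x).div_const 120)).sub ((hasDerivAt_pow 7 x).div_const 5040)).add
        ((hasDerivAt_pow 9 x).div_const 362880) |>.sub (Real.hasDerivAt_sin x)
    convert h using 1; ring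
  · norm_num
  · exact chain8

private lemma chain10 : ∀ x : ℝ, 0 ≤ x →
    0 ≤ Real.cos x - (1 - x^2/2 + x^4/24 - x^6/720 + x^8/40320 - x^10/3628800) := by
  apply nonneg_of_deriv'
    (f' := fun x => (x - x^3/6 + x^5/120 - x^7/5040 + x^9/362880) - Real.sin x)
  · intro x
    have h : HasDerivAt
        (fun x : ℝ => Real.cos x - (1 - x^2/2 + x^4/24 - x^6/720 + x^8/40320 - x^10/3628800))
        (-Real.sin x - (0 - 2*x^(2-1)/2 + 4*x^(4-1)/24 - 6*x^(6-1)/720 + 8*x^(8-1)/40320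
          - 10*x^(10-1)/3628800)) x :=
      (Real.hasDerivAt_cos x).sub ((((((hasDerivAt_const x (1:ℝ)).sub
        ((hasDerivAt_pow 2 x).div_const 2)).add ((hasDerivAt_pow 4 x).div_const 24)).sub
        ((hasDerivAt_pow 6 x).div_const 720)).add ((hasDerivAt_pow 8 x).div_const 40320)).sub
        ((hasDerivAt_pow 10 x).div_const 3628800))
    convert h using 1; ring
  · norm_num
  · exact chain9

private lemma sc_bounds1 : 0.890980429 ≤ Real.sin 1.0995 ∧ Real.sin 1.0995 ≤ 0.890980452 ∧
    0.454041668 ≤ Real.cos 1.0995 ∧ Real.cos 1.0995 ≤ 0.454041695 := by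
  have e1 : Real.sin 1.0995 = 2 * Real.sin 0.54975 * Real.cos 0.54975 := by
    rw [show (1.0995:ℝ) = 2*0.54975 by norm_num, Real.sin_two_mul]
  have e2 : Real.cos 1.0995 = 1 - 2 * Real.sin 0.54975 ^ 2 := by
    rw [show (1.0995:ℝ) = 2*0.54975 by norm_num, Real.cos_two_mul]
    nlinarith [Real.sin_sq_add_cos_sq (0.54975:ℝ)]
  have h0 : (0:ℝ) ≤ 0.54975 := by norm_num
  have hsl : (0.522474068863:ℝ) ≤ Real.sin 0.54975 := by
    have := chain7 0.54975 h0; nlinarith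
  have hsu : Real.sin 0.54975 ≤ 0.522474081504 := by
    have := chain9 0.54975 h0; nlinarith
  have hcl : (0.852655167222:ℝ) ≤ Real.cos 0.54975 := by
    have := chain10 0.54975 h0; nlinarith
  have hcu : Real.cos 0.54975 ≤ 0.852655167918 := by
    have := chain8 0.54975 h0; nlinarith
  simp only [e1, e2]
  refine ⟨by nlinarith, by nlinarith, by nlinarith, by nlinarith⟩

private lemma sc_bounds2 : 0.891025828 ≤ Real.sin 1.0996 ∧ Real.sin 1.0996 ≤ 0.891025852 ∧
    0.453952567 ≤ Real.cos 1.0996 ∧ Real.cos 1.0996 ≤ 0.453952595 := by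
  have e1 : Real.sin 1.0996 = 2 * Real.sin 0.5498 * Real.cos 0.5498 := by
    rw [show (1.0996:ℝ) = 2*0.5498 by norm_num, Real.sin_two_mul]
  have e2 : Real.cos 1.0996 = 1 - 2 * Real.sin 0.5498 ^ 2 := by
    rw [show (1.0996:ℝ) = 2*0.5498 by norm_num, Real.cos_two_mul]
    nlinarith [Real.sin_sq_add_cos_sq (0.5498:ℝ)]
  have h0 : (0:ℝ) ≤ 0.5498 := by norm_num
  have hsl : (0.522516700958:ℝ) ≤ Real.sin 0.5498 := by
    have := chain7 0.5498 h0; nlinarith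
  have hsu : Real.sin 0.5498 ≤ 0.522516713609 := by
    have := chain9 0.5498 h0; nlinarith
  have hcl : (0.852629042452:ℝ) ≤ Real.cos 0.5498 := by
    have := chain10 0.5498 h0; nlinarith
  have hcu : Real.cos 0.5498 ≤ 0.852629043148 := by
    have := chain8 0.5498 h0; nlinarith
  simp only [e1, e2]
  refine ⟨by nlinarith, by nlinarith, by nlinarith, by nlinarith⟩

private lemma exp_ub85332 : Real.exp 0.85332 ≤ 2.3474273881 := by
  have hb := Real.exp_bound (x := (0.85332:ℝ))
    (abs_le.mpr ⟨by norm_num, by norm_num⟩) (n := 13) (by norm_num)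
  rw [show |(0.85332:ℝ)| = 0.85332 from abs_of_pos (by norm_num)] at hb
  have h2 := (abs_le.mp hb).2
  have hsum : ∑ i ∈ Finset.range 13, (0.85332:ℝ) ^ i / (Nat.factorial i : ℝ) ≤ 2.3474273880 := by
    simp only [Finset.sum_range_succ, Finset.sum_range_zero, Nat.factorial]
    norm_num
  have herr : (0.85332:ℝ) ^ 13 * ((Nat.succ 13 : ℕ) / ((Nat.factorial 13 : ℕ) * (13:ℕ) : ℝ))
      ≤ 0.0000000001 := by
    simp only [Nat.factorial]
    norm_num
  push_cast at h2 herr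
  linarith

private lemma exp_lb8538 : (2.3485544235:ℝ) ≤ Real.exp 0.8538 := by
  have hb := Real.exp_bound (x := (0.8538:ℝ))
    (abs_le.mpr ⟨by norm_num, by norm_num⟩) (n := 13) (by norm_num)
  rw [show |(0.8538:ℝ)| = 0.8538 from abs_of_pos (by norm_num)] at hb
  have h2 := (abs_le.mp hb).1
  have hsum : (2.3485544236:ℝ) ≤ ∑ i ∈ Finset.range 13, (0.8538:ℝ) ^ i / (Nat.factorial i : ℝ) := by
    simp only [Finset.sum_range_succ, Finset.sum_range_zero, Nat.factorial]
    norm_num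
  have herr : (0.8538:ℝ) ^ 13 * ((Nat.succ 13 : ℕ) / ((Nat.factorial 13 : ℕ) * (13:ℕ) : ℝ))
      ≤ 0.0000000001 := by
    simp only [Nat.factorial]
    norm_num
  push_cast at h2 herr
  linarith

noncomputable def Faux : ℝ → ℝ := fun θ =>
  Real.log (1 + Real.sin θ) - Real.log (1 - Real.sin θ) - Real.sin θ / Real.cos θ - Real.sin θ

private lemma Faux_hasDeriv (θ : ℝ) (hc : 0 < Real.cos θ) :
    HasDerivAt Faux ((2*Real.cos θ - 1 - Real.cos θ^3)/Real.cos θ^2) θ := by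
  have hpy := Real.sin_sq_add_cos_sq θ
  have h1p : 0 < 1 + Real.sin θ := by nlinarith
  have h1m : 0 < 1 - Real.sin θ := by nlinarith
  have d1 : HasDerivAt (fun θ => Real.log (1 + Real.sin θ)) (Real.cos θ/(1+Real.sin θ)) θ :=
    HasDerivAt.log ((Real.hasDerivAt_sin θ).const_add 1) (ne_of_gt h1p)
  have d2 : HasDerivAt (fun θ => Real.log (1 - Real.sin θ)) ((-Real.cos θ)/(1-Real.sin θ)) θ :=
    HasDerivAt.log ((Real.hasDerivAt_sin θ).const_sub 1) (ne_of_gt h1m)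
  have d3 : HasDerivAt (fun θ => Real.sin θ / Real.cos θ)
      ((Real.cos θ * Real.cos θ - Real.sin θ * (-Real.sin θ))/Real.cos θ^2) θ :=
    (Real.hasDerivAt_sin θ).div (Real.hasDerivAt_cos θ) (ne_of_gt hc)
  have d : HasDerivAt Faux (Real.cos θ/(1+Real.sin θ) - (-Real.cos θ)/(1-Real.sin θ)
      - (Real.cos θ * Real.cos θ - Real.sin θ * (-Real.sin θ))/Real.cos θ^2 - Real.cos θ) θ :=
    ((d1.sub d2).sub d3).sub (Real.hasDerivAt_sin θ)
  convert d using 1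
  field_simp
  linear_combination (1 - 2*Real.cos θ - Real.sin θ^2) * hpy

private lemma Gbridge (θ : ℝ) (hc : 0 < Real.cos θ) :
    Real.cos θ * Real.log ((1 + Real.sin θ)/(1 - Real.sin θ)) - (1 + Real.cos θ) * Real.sin θ
      = Real.cos θ * Faux θ := by
  have hpy := Real.sin_sq_add_cos_sq θ
  have h1p : 0 < 1 + Real.sin θ := by nlinarith
  have h1m : 0 < 1 - Real.sin θ := by nlinarith
  unfold Faux
  rw [Real.log_div (ne_of_gt h1p) (ne_of_gt h1m)]
  field_simp
  ring

private lemma Faux_pos_at_a : 0 < Faux 1.0995 := by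
  obtain ⟨hsl, hsu, hcl, hcu⟩ := sc_bounds1
  have h1m : (0:ℝ) < 1 - Real.sin 1.0995 := by linarith
  have h1p : (0:ℝ) < 1 + Real.sin 1.0995 := by linarith
  have hcp : (0:ℝ) < Real.cos 1.0995 := by linarith
  have hlog : (2.85332:ℝ) ≤ Real.log ((1 + Real.sin 1.0995)/(1 - Real.sin 1.0995)) := by
    rw [Real.le_log_iff_exp_le (by positivity)]
    have e0 : Real.exp 2.85332 = Real.exp 1 * Real.exp 1 * Real.exp 0.85332 := by
      rw [← Real.exp_add, ← Real.exp_add]; norm_num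
    have e1 := Real.exp_one_lt_d9
    have e2 := exp_ub85332
    have p1 := Real.exp_pos 1
    have p3 := Real.exp_pos (0.85332:ℝ)
    have hstep : Real.exp 2.85332 ≤ 2.7182818286 * 2.7182818286 * 2.3474273881 := by
      rw [e0]; nlinarith
    have hstep2 : (2.7182818286:ℝ) * 2.7182818286 * 2.3474273881
        ≤ 1.890980429/0.109019571 := by norm_num
    have hstep3 : (1.890980429:ℝ)/0.109019571
        ≤ (1 + Real.sin 1.0995)/(1 - Real.sin 1.0995) := by
      rw [div_le_div_iff₀ (by norm_num) h1m]; nlinarith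
    linarith
  have htan : Real.sin 1.0995 / Real.cos 1.0995 ≤ 0.890980452/0.454041668 := by
    rw [div_le_div_iff₀ hcp (by norm_num)]; nlinarith
  have hfin : (0.890980452:ℝ)/0.454041668 + 0.890980452 < 2.85332 := by norm_num
  have hlogsplit : Real.log (1 + Real.sin 1.0995) - Real.log (1 - Real.sin 1.0995)
      = Real.log ((1 + Real.sin 1.0995)/(1 - Real.sin 1.0995)) :=
    (Real.log_div (ne_of_gt h1p) (ne_of_gt h1m)).symm
  unfold Faux
  rw [hlogsplit]
  linarith

private lemma Faux_neg_at_b : Faux 1.0996 < 0 := by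
  obtain ⟨hsl, hsu, hcl, hcu⟩ := sc_bounds2
  have h1m : (0:ℝ) < 1 - Real.sin 1.0996 := by linarith
  have h1p : (0:ℝ) < 1 + Real.sin 1.0996 := by linarith
  have hcp : (0:ℝ) < Real.cos 1.0996 := by linarith
  have hlog : Real.log ((1 + Real.sin 1.0996)/(1 - Real.sin 1.0996)) ≤ 2.8538 := by
    rw [Real.log_le_iff_le_exp (by positivity)]
    have e0 : Real.exp 2.8538 = Real.exp 1 * Real.exp 1 * Real.exp 0.8538 := by
      rw [← Real.exp_add, ← Real.exp_add]; norm_num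
    have e1 := Real.exp_one_gt_d9
    have e2 := exp_lb8538
    have p1 := Real.exp_pos 1
    have hstep : (2.7182818283:ℝ) * 2.7182818283 * 2.3485544235 ≤ Real.exp 2.8538 := by
      rw [e0]; nlinarith
    have hstep2 : (1.891025852:ℝ)/0.108974148
        ≤ (2.7182818283:ℝ) * 2.7182818283 * 2.3485544235 := by norm_num
    have hstep3 : (1 + Real.sin 1.0996)/(1 - Real.sin 1.0996)
        ≤ (1.891025852:ℝ)/0.108974148 := by
      rw [div_le_div_iff₀ h1m (by norm_num)]; nlinarith
    linarith
  have htan : (0.891025828:ℝ)/0.453952595 ≤ Real.sin 1.0996 / Real.cos 1.0996 := by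
    rw [div_le_div_iff₀ (by norm_num) hcp]; nlinarith
  have hfin : (2.8538:ℝ) < 0.891025828/0.453952595 + 0.891025828 := by norm_num
  have hlogsplit : Real.log (1 + Real.sin 1.0996) - Real.log (1 - Real.sin 1.0996)
      = Real.log ((1 + Real.sin 1.0996)/(1 - Real.sin 1.0996)) :=
    (Real.log_div (ne_of_gt h1p) (ne_of_gt h1m)).symm
  unfold Faux
  rw [hlogsplit]
  linarith

set_option maxHeartbeats 1600000 in
theorem unique_root_thetaStar :
    ∃ θs : ℝ, θs ∈ Set.Ioo 0 (π / 2) ∧ 1.0995 < θs ∧ θs < 1.0996 ∧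
      cos θs * log ((1 + sin θs) / (1 - sin θs)) - (1 + cos θs) * sin θs = 0 ∧
      (∀ θ ∈ Set.Ioo 0 (π / 2),
        cos θ * log ((1 + sin θ) / (1 - sin θ)) - (1 + cos θ) * sin θ = 0 → θ = θs) ∧
      (∀ θ : ℝ, 0 < θ → θ < θs →
        0 < cos θ * log ((1 + sin θ) / (1 - sin θ)) - (1 + cos θ) * sin θ) ∧
      (∀ θ : ℝ, θs < θ → θ < π / 2 →
        cos θ * log ((1 + sin θ) / (1 - sin θ)) - (1 + cos θ) * sin θ < 0) := by
  have hpi : (3.141592:ℝ) < π := Real.pi_gt_d6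
  have hb_lt_pi2 : (1.0996:ℝ) < π/2 := by linarith
  -- the golden-ratio-like constant
  set φ : ℝ := (Real.sqrt 5 - 1)/2 with hφdef
  have hs5 : Real.sqrt 5 ^ 2 = 5 := Real.sq_sqrt (by norm_num)
  have hs5nn : 0 ≤ Real.sqrt 5 := Real.sqrt_nonneg 5
  have hs5lb : (2.2:ℝ) < Real.sqrt 5 := by nlinarith
  have hs5ub : Real.sqrt 5 < 2.3 := by nlinarith
  have hφpos : 0 < φ := by rw [hφdef]; linarith
  have hφlt1 : φ < 1 := by rw [hφdef]; linarith
  have hφeq : φ^2 + φ - 1 = 0 := by rw [hφdef]; nlinarith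
  set θ1 : ℝ := Real.arccos φ with hθ1def
  have hcosθ1 : Real.cos θ1 = φ := Real.cos_arccos (by linarith) (by linarith)
  have hθ1pos : 0 < θ1 := Real.arccos_pos.mpr hφlt1
  have hθ1lt : θ1 < π/2 := Real.arccos_lt_pi_div_two.mpr hφpos
  have hθ1mem : θ1 ∈ Set.Icc (0:ℝ) π := ⟨Real.arccos_nonneg φ, Real.arccos_le_pi φ⟩
  obtain ⟨hsl1, hsu1, hcl1, hcu1⟩ := sc_bounds1
  have hθ1lt_a : θ1 < 1.0995 := by
    by_contra h
    push_neg at h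
    have hmem_a : (1.0995:ℝ) ∈ Set.Icc (0:ℝ) π := by constructor <;> linarith
    rcases eq_or_lt_of_le h with h' | h'
    · rw [← h'] at hcosθ1; linarith
    · have := Real.strictAntiOn_cos hmem_a hθ1mem h'
      rw [hcosθ1] at this; linarith
  -- positivity of cos on our working range
  have hcospos : ∀ θ : ℝ, 0 ≤ θ → θ < π/2 → 0 < Real.cos θ := by
    intro θ h0 h2
    exact Real.cos_pos_of_mem_Ioo ⟨by linarith [Real.pi_pos], h2⟩
  -- strict monotonicity on [0, θ1]
  have hmono : StrictMonoOn Faux (Set.Icc 0 θ1) := by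
    apply strictMonoOn_of_deriv_pos (convex_Icc 0 θ1)
    · intro t ht
      exact (Faux_hasDeriv t (hcospos t ht.1 (lt_of_le_of_lt ht.2 hθ1lt))).continuousAt.continuousWithinAt
    · intro t ht
      rw [interior_Icc] at ht
      have htpos : 0 < t := ht.1
      have htlt : t < π/2 := lt_trans ht.2 hθ1lt
      have hc : 0 < Real.cos t := hcospos t htpos.le htlt
      have hmem_t : t ∈ Set.Icc (0:ℝ) π := ⟨htpos.le, by linarith⟩
      have hcφ : φ < Real.cos t := by
        have := Real.strictAntiOn_cos hmem_t hθ1mem ht.2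
        rwa [hcosθ1] at this
      have hc1 : Real.cos t < 1 := by
        have := Real.strictAntiOn_cos (Set.left_mem_Icc.mpr Real.pi_pos.le) hmem_t htpos
        rwa [Real.cos_zero] at this
      rw [(Faux_hasDeriv t hc).deriv]
      have h1 : 0 < Real.cos t^2 + Real.cos t - 1 := by
        nlinarith [mul_pos (sub_pos.2 hcφ) (show 0 < Real.cos t + φ by linarith)]
      have h2 : 0 < (1 - Real.cos t)*(Real.cos t^2 + Real.cos t - 1) :=
        mul_pos (by linarith) h1
      have h3 : 0 < 2*Real.cos t - 1 - Real.cos t^3 := by nlinarith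
      positivity
  -- strict antitonicity on [θ1, π/2)
  have hanti : StrictAntiOn Faux (Set.Ico θ1 (π/2)) := by
    apply strictAntiOn_of_deriv_neg (convex_Ico θ1 (π/2))
    · intro t ht
      exact (Faux_hasDeriv t (hcospos t (le_trans hθ1pos.le ht.1) ht.2)).continuousAt.continuousWithinAt
    · intro t ht
      rw [interior_Ico] at ht
      have htpos : 0 < t := lt_trans hθ1pos ht.1
      have htlt : t < π/2 := ht.2
      have hc : 0 < Real.cos t := hcospos t htpos.le htlt
      have hmem_t : t ∈ Set.Icc (0:ℝ) π := ⟨htpos.le, by linarith⟩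
      have hcφ : Real.cos t < φ := by
        have := Real.strictAntiOn_cos hθ1mem hmem_t ht.1
        rwa [hcosθ1] at this
      rw [(Faux_hasDeriv t hc).deriv]
      have h1 : Real.cos t^2 + Real.cos t - 1 < 0 := by
        nlinarith [mul_pos (sub_pos.2 hcφ) (show 0 < Real.cos t + φ by linarith)]
      have h2 : (1 - Real.cos t)*(Real.cos t^2 + Real.cos t - 1) < 0 :=
        mul_neg_of_pos_of_neg (by linarith) h1
      have h3 : 2*Real.cos t - 1 - Real.cos t^3 < 0 := by nlinarith
      exact div_neg_of_neg_of_pos h3 (by positivity)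
  have hF0 : Faux 0 = 0 := by simp [Faux]
  -- IVT on [1.0995, 1.0996]
  have hcont : ContinuousOn Faux (Set.Icc 1.0995 1.0996) := by
    intro t ht
    exact (Faux_hasDeriv t (hcospos t (by linarith [ht.1]) (by linarith [ht.2]))).continuousAt.continuousWithinAt
  have hsub := intermediate_value_Ioo' (by norm_num : (1.0995:ℝ) ≤ 1.0996) hcont
  have h0mem : (0:ℝ) ∈ Set.Ioo (Faux 1.0996) (Faux 1.0995) := ⟨Faux_neg_at_b, Faux_pos_at_a⟩
  obtain ⟨θs, hθsmem, hθsroot⟩ := hsub h0mem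
  have hθs1 : (1.0995:ℝ) < θs := hθsmem.1
  have hθs2 : θs < 1.0996 := hθsmem.2
  have hθspos : 0 < θs := by linarith
  have hθslt : θs < π/2 := by linarith
  have hθsIco : θs ∈ Set.Ico θ1 (π/2) := ⟨by linarith, hθslt⟩
  -- sign of Faux left of θs
  have hFpos : ∀ θ : ℝ, 0 < θ → θ < θs → 0 < Faux θ := by
    intro θ h0 hlt
    rcases le_or_gt θ θ1 with hle | hgt
    · have := hmono (Set.left_mem_Icc.mpr hθ1pos.le) ⟨h0.le, hle⟩ h0
      rwa [hF0] at this
    · have hmemθ : θ ∈ Set.Ico θ1 (π/2) := ⟨hgt.le, by linarith⟩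
      have := hanti hmemθ hθsIco hlt
      rwa [hθsroot] at this
  have hFneg : ∀ θ : ℝ, θs < θ → θ < π/2 → Faux θ < 0 := by
    intro θ hlt hltpi
    have hmemθ : θ ∈ Set.Ico θ1 (π/2) := ⟨by linarith, hltpi⟩
    have := hanti hθsIco hmemθ hlt
    rwa [hθsroot] at this
  have hcosθs : 0 < Real.cos θs := hcospos θs hθspos.le hθslt
  refine ⟨θs, ⟨hθspos, hθslt⟩, hθs1, hθs2, ?_, ?_, ?_, ?_⟩
  · rw [Gbridge θs hcosθs, hθsroot, mul_zero]
  · intro θ hθ hroot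
    have hcθ : 0 < Real.cos θ := hcospos θ hθ.1.le hθ.2
    rw [Gbridge θ hcθ] at hroot
    have hFθ : Faux θ = 0 := by
      rcases mul_eq_zero.mp hroot with h | h
      · exact absurd h (ne_of_gt hcθ)
      · exact h
    rcases lt_trichotomy θ θs with h | h | h
    · exact absurd hFθ (ne_of_gt (hFpos θ hθ.1 h))
    · exact h
    · exact absurd hFθ (ne_of_lt (hFneg θ h hθ.2))
  · intro θ h0 hlt
    have hcθ : 0 < Real.cos θ := hcospos θ h0.le (by linarith)
    rw [Gbridge θ hcθ]
    exact mul_pos hcθ (hFpos θ h0 hlt)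
  · intro θ hlt hltpi
    have hcθ : 0 < Real.cos θ := hcospos θ (by linarith) hltpi
    rw [Gbridge θ hcθ]
    exact mul_neg_of_pos_of_neg hcθ (hFneg θ hlt hltpi)
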